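/- Let X be a path-connected space with basepoint x₀ and H ≤ π₁(X,x₀). If X is an H-SLT space, then for every path α from x₀ with α(1) = x: X is homotopically Hausdorff relative to H_α if and only if H_α is a closed subset of π₁(X,x) equipped with the whisker topology. -/

import Mathlib

open CategoryTheory Topology
open scoped Pointwise

noncomputable section
namespace Paper

variable {X : Type*} [TopologicalSpace X]

attribute [local instance] Path.Homotopic.setoid

/-- The homotopy class of a loop as an element of the fundamental group. -/
def loopClass {x : X} (γ : Path x x) : FundamentalGroup X x :=
  (⟦γ⟧ : FundamentalGroupoid.mk x ⟶ FundamentalGroupoid.mk x)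

/-- Conjugation of the fundamental group along a path: `h ↦ [ᾱ ∗ h ∗ α]`. -/
def pathConj {x₀ x : X} (α : Path x₀ x) :
    FundamentalGroup X x₀ ≃* FundamentalGroup X x :=
  FundamentalGroup.fundamentalGroupMulEquivOfPath α

/-- The path-conjugate subgroup `H_α = [ᾱ H α]`. -/
def conjSubgroup {x₀ x : X} (H : Subgroup (FundamentalGroup X x₀)) (α : Path x₀ x) :
    Subgroup (FundamentalGroup X x) :=
  H.map (pathConj α).toMonoidHom

/-- `π(α,V)`: the subgroup of `π₁(X,x₀)` generated by classes `[α∗β∗ᾱ]`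
with `β` a loop at `α(1)` lying in `V`. -/
def piSub {x₀ x : X} (α : Path x₀ x) (V : Set X) : Subgroup (FundamentalGroup X x₀) :=
  Subgroup.closure
    {g | ∃ β : Path x x, (∀ t, β t ∈ V) ∧ g = loopClass ((α.trans β).trans α.symm)}

/-- `i₍#₎π₁(V,x)`: the image in `π₁(X,x)` of the fundamental group of `V`. -/
def loopSubgroup (x : X) (V : Set X) : Subgroup (FundamentalGroup X x) :=
  Subgroup.closure {g | ∃ β : Path x x, (∀ t, β t ∈ V) ∧ g = loopClass β}

/-- `H` is locally quasinormal. -/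
def LocallyQuasinormal {x₀ : X} (H : Subgroup (FundamentalGroup X x₀)) : Prop :=
  ∀ (x : X) (α : Path x₀ x) (U : Set X), IsOpen U → x ∈ U →
    ∃ V : Set X, V ⊆ U ∧ IsOpen V ∧ x ∈ V ∧
      (H : Set (FundamentalGroup X x₀)) * (piSub α V : Set (FundamentalGroup X x₀)) =
        (piSub α V : Set (FundamentalGroup X x₀)) * (H : Set (FundamentalGroup X x₀))

/-- `X` is an `H`-SLT space at the basepoint of `H`. -/
def SLTAt {b : X} (H : Subgroup (FundamentalGroup X b)) : Prop :=
  ∀ (x : X) (α : Path b x) (U : Set X), IsOpen U → b ∈ U →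
    ∃ V : Set X, IsOpen V ∧ x ∈ V ∧
      ∀ β : Path x x, (∀ t, β t ∈ V) →
        loopClass ((α.trans β).trans α.symm) ∈
          (H : Set (FundamentalGroup X b)) * (loopSubgroup b U : Set (FundamentalGroup X b))

/-- `X` is an `H`-SLT space. -/
def IsHSLT {x₀ : X} (H : Subgroup (FundamentalGroup X x₀)) : Prop :=
  ∀ (x : X) (δ : Path x₀ x), SLTAt (conjSubgroup H δ)

/-- `X` is a strong `H`-SLT space at the basepoint of `H`. -/
def StrongSLTAt {b : X} (H : Subgroup (FundamentalGroup X b)) : Prop :=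
  ∀ (x : X) (U : Set X), IsOpen U → b ∈ U →
    ∃ V : Set X, IsOpen V ∧ x ∈ V ∧
      ∀ (α : Path b x) (β : Path x x), (∀ t, β t ∈ V) →
        loopClass ((α.trans β).trans α.symm) ∈
          (H : Set (FundamentalGroup X b)) * (loopSubgroup b U : Set (FundamentalGroup X b))

/-- `X` is a strong `H`-SLT space. -/
def IsStrongHSLT {x₀ : X} (H : Subgroup (FundamentalGroup X x₀)) : Prop :=
  ∀ (x : X) (δ : Path x₀ x), StrongSLTAt (conjSubgroup H δ)

/-- `X` is homotopically Hausdorff relative to `H`. -/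
def HomotopicallyHausdorffRel {b : X} (H : Subgroup (FundamentalGroup X b)) : Prop :=
  ∀ (x : X) (α : Path b x) (g : FundamentalGroup X b), g ∉ H →
    ∃ U : Set X, IsOpen U ∧ x ∈ U ∧
      ∀ β : Path x x, (∀ t, β t ∈ U) →
        ∀ h ∈ H, loopClass ((α.trans β).trans α.symm) ≠ h * g

/-- `X` is homotopically path Hausdorff relative to `H`. -/
def HomotopicallyPathHausdorffRel {b : X} (H : Subgroup (FundamentalGroup X b)) : Prop :=
  ∀ (x : X) (α β : Path b x), loopClass (α.trans β.symm) ∉ H →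
    ∃ (n : ℕ), 0 < n ∧
    ∃ (t : Fin (n + 1) → unitInterval) (U : Fin n → Set X),
      StrictMono t ∧ t 0 = 0 ∧ t (Fin.last n) = 1 ∧
      (∀ i : Fin n, IsOpen (U i) ∧ ∀ s ∈ Set.Icc (t i.castSucc) (t i.succ), α s ∈ U i) ∧
      ∀ γ : Path b x,
        (∀ i : Fin n, ∀ s ∈ Set.Icc (t i.castSucc) (t i.succ), γ s ∈ U i) →
        (∀ j : Fin (n + 1), γ (t j) = α (t j)) →
        loopClass (γ.trans β.symm) ∉ H

/-- The collection of paths starting at `b`, with free endpoint. -/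
def PathsFrom (b : X) := Σ x : X, Path b x

/-- The relation identifying paths in the standard construction `X̃_H`. -/
def stdRel {b : X} (H : Subgroup (FundamentalGroup X b)) :
    PathsFrom b → PathsFrom b → Prop :=
  fun p q => ∃ h : q.1 = p.1, loopClass (p.2.trans (h ▸ q.2).symm) ∈ H

/-- The standard construction `X̃_H`. -/
def StdConstr {b : X} (H : Subgroup (FundamentalGroup X b)) := Quot (stdRel H)

/-- The class `[α]_H` of a path in the standard construction. -/
def stdClass {b : X} (H : Subgroup (FundamentalGroup X b)) (p : PathsFrom b) :
    StdConstr H :=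
  Quot.mk _ p

/-- The basic whisker neighborhood `N_H([α]_H, U)`. -/
def whiskerNbhd {b : X} (H : Subgroup (FundamentalGroup X b)) (p : PathsFrom b)
    (U : Set X) : Set (StdConstr H) :=
  {z | ∃ (y : X) (δ : Path p.1 y), (∀ t, δ t ∈ U) ∧ z = stdClass H ⟨y, p.2.trans δ⟩}

/-- The whisker topology on the standard construction. -/
def whiskerTopology {b : X} (H : Subgroup (FundamentalGroup X b)) :
    TopologicalSpace (StdConstr H) :=
  TopologicalSpace.generateFrom
    {s | ∃ (p : PathsFrom b) (U : Set X), IsOpen U ∧ p.1 ∈ U ∧ s = whiskerNbhd H p U}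

/-- The Spanier subgroup `π(𝒰, y)` of `π₁(X,y)` associated to a family `𝒰` of subsets. -/
def spanier (y : X) (𝒰 : Set (Set X)) : Subgroup (FundamentalGroup X y) :=
  Subgroup.closure
    {g | ∃ (z : X) (γ : Path y z) (β : Path z z), (∃ U ∈ 𝒰, ∀ t, β t ∈ U) ∧
          g = loopClass ((γ.trans β).trans γ.symm)}

/-- An open cover of `X`. -/
def IsOpenCover (𝒰 : Set (Set X)) : Prop :=
  (∀ U ∈ 𝒰, IsOpen U) ∧ ⋃₀ 𝒰 = Set.univ

/-- The basic lasso neighborhood `N_H([α]_H, 𝒰, U)`. -/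
def lassoNbhd {b : X} (H : Subgroup (FundamentalGroup X b)) (p : PathsFrom b)
    (𝒰 : Set (Set X)) (U : Set X) : Set (StdConstr H) :=
  {z | ∃ (l : Path p.1 p.1) (y : X) (δ : Path p.1 y),
        loopClass l ∈ spanier p.1 𝒰 ∧ (∀ t, δ t ∈ U) ∧
        z = stdClass H ⟨y, (p.2.trans l).trans δ⟩}

/-- The lasso topology on the standard construction. -/
def lassoTopology {b : X} (H : Subgroup (FundamentalGroup X b)) :
    TopologicalSpace (StdConstr H) :=
  TopologicalSpace.generateFrom
    {s | ∃ (p : PathsFrom b) (𝒰 : Set (Set X)) (U : Set X),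
          IsOpenCover 𝒰 ∧ U ∈ 𝒰 ∧ IsOpen U ∧ p.1 ∈ U ∧ s = lassoNbhd H p 𝒰 U}

/-- The endpoint projection `p_H : X̃_H → X`. -/
def endPt {b : X} (H : Subgroup (FundamentalGroup X b)) : StdConstr H → X :=
  Quot.lift (fun p => p.1) (fun _ _ h => h.1.symm)

/-- The whisker topology on the fundamental group `π₁^{wh}(X,x)`. -/
def whiskerTopOnPi (x : X) : TopologicalSpace (FundamentalGroup X x) :=
  TopologicalSpace.generateFrom
    {s | ∃ (g : FundamentalGroup X x) (U : Set X), IsOpen U ∧ x ∈ U ∧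
          s = {g' | ∃ β : Path x x, (∀ t, β t ∈ U) ∧ g' = g * loopClass β}}

/-- The quasitopological fundamental group topology `π₁^{qtop}(X,x)`: the quotient of the
compact-open topology on the loop space. -/
def qTop (x : X) : TopologicalSpace (FundamentalGroup X x) :=
  TopologicalSpace.coinduced loopClass inferInstance

/-- A map `p : E → X` (with `E` carrying the topology `tE`) has the unique path
lifting property. -/
def UniquePathLifting {E : Type*} (tE : TopologicalSpace E) (p : E → X) : Prop :=
  letI := tE
  ∀ f g : C(unitInterval, E), (∀ t, p (f t) = p (g t)) → f 0 = g 0 → f = g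

/-- The small loop subgroup `π₁ˢ(X,x)`. -/
def smallLoopSubgroup (x : X) : Subgroup (FundamentalGroup X x) :=
  ⨅ (U : Set X) (_ : IsOpen U) (_ : x ∈ U), loopSubgroup x U

/-- The Spanier group `π₁^{sp}(X,x)`: the intersection of all Spanier subgroups. -/
def spanierGroup (x : X) : Subgroup (FundamentalGroup X x) :=
  ⨅ (𝒰 : Set (Set X)) (_ : IsOpenCover 𝒰), spanier x 𝒰

/-- The path Spanier subgroup `π̃(𝒱, x₀)` of a path open cover `𝒱`. -/
def pathSpanier {b : X} (𝒱 : PathsFrom b → Set X) : Subgroup (FundamentalGroup X b) :=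
  Subgroup.closure
    {g | ∃ (p : PathsFrom b) (β : Path p.1 p.1), (∀ t, β t ∈ 𝒱 p) ∧
          g = loopClass ((p.2.trans β).trans p.2.symm)}

end Paper
end
namespace Paper
variable {X : Type*} [TopologicalSpace X]

attribute [local instance] Path.Homotopic.setoid

open CategoryTheory in
lemma loopClass_eq_of {x : X} {γ δ : Path x x}
    (h : (⟦γ⟧ : Path.Homotopic.Quotient x x) = ⟦δ⟧) : loopClass γ = loopClass δ :=
  h

lemma loopClass_trans {x : X} (γ δ : Path x x) :
    loopClass (γ.trans δ) = loopClass δ * loopClass γ := by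
  show (⟦γ.trans δ⟧ : Path.Homotopic.Quotient x x) = Path.Homotopic.Quotient.trans ⟦γ⟧ ⟦δ⟧
  exact Path.Homotopic.Quotient.mk_trans γ δ

lemma loopClass_refl {x : X} : loopClass (Path.refl x) = 1 := rfl

lemma loopClass_symm {x : X} (γ : Path x x) : loopClass γ.symm = (loopClass γ)⁻¹ := by
  refine eq_inv_of_mul_eq_one_left ?_
  rw [← loopClass_trans]
  rw [loopClass_eq_of (Quotient.sound ⟨(Path.Homotopy.reflTransSymm γ).symm⟩), loopClass_refl]

lemma loopClass_refl_conj {x : X} (δ : Path x x) :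
    loopClass (((Path.refl x).trans δ).trans (Path.refl x).symm) = loopClass δ := by
  rw [Path.refl_symm, loopClass_trans, loopClass_trans, loopClass_refl]
  group

lemma trans_mem {x y z : X} {U : Set X} {a : Path x y} {b : Path y z}
    (ha : ∀ t, a t ∈ U) (hb : ∀ t, b t ∈ U) : ∀ t, (a.trans b) t ∈ U := by
  intro t
  rw [Path.trans_apply]
  split <;> [exact ha _; exact hb _]

lemma loopSubgroup_mem {x : X} {U : Set X} (hx : x ∈ U) {g : FundamentalGroup X x}
    (hg : g ∈ loopSubgroup x U) : ∃ β : Path x x, (∀ t, β t ∈ U) ∧ g = loopClass β := by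
  induction hg using Subgroup.closure_induction with
  | mem g hgm => exact hgm
  | one => exact ⟨Path.refl x, fun _ => hx, loopClass_refl.symm⟩
  | mul a b _ _ iha ihb =>
    obtain ⟨β, hβ, rfl⟩ := iha
    obtain ⟨γ, hγ, rfl⟩ := ihb
    exact ⟨γ.trans β, trans_mem hγ hβ, (loopClass_trans γ β).symm⟩
  | inv a _ iha =>
    obtain ⟨β, hβ, rfl⟩ := iha
    exact ⟨β.symm, fun t => hβ _, (loopClass_symm β).symm⟩

lemma whisker_basis {x : X} {O : Set (FundamentalGroup X x)}
    (hO : IsOpen[whiskerTopOnPi x] O) {g : FundamentalGroup X x} (hg : g ∈ O) :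
    ∃ U : Set X, IsOpen U ∧ x ∈ U ∧
      {g' | ∃ β : Path x x, (∀ t, β t ∈ U) ∧ g' = g * loopClass β} ⊆ O := by
  induction hO with
  | @basic s hs =>
      obtain ⟨g₁, U₁, hU₁, hxU₁, rfl⟩ := hs
      obtain ⟨γ₁, hγ₁, rfl⟩ := hg
      refine ⟨U₁, hU₁, hxU₁, ?_⟩
      rintro g' ⟨δ, hδ, rfl⟩
      exact ⟨δ.trans γ₁, trans_mem hδ hγ₁, by rw [loopClass_trans]; group⟩
  | univ => exact ⟨Set.univ, isOpen_univ, trivial, fun _ _ => trivial⟩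
  | inter s t _ _ ihs iht =>
      obtain ⟨U, hU, hxU, hUs⟩ := ihs hg.1
      obtain ⟨V, hV, hxV, hVt⟩ := iht hg.2
      refine ⟨U ∩ V, hU.inter hV, ⟨hxU, hxV⟩, ?_⟩
      rintro g' ⟨β, hβ, hg'⟩
      exact ⟨hUs ⟨β, fun t => (hβ t).1, hg'⟩, hVt ⟨β, fun t => (hβ t).2, hg'⟩⟩
  | sUnion S _ ih =>
      obtain ⟨s, hsS, hgs⟩ := hg
      obtain ⟨U, hU, hxU, hUs⟩ := ih s hsS hgs
      exact ⟨U, hU, hxU, fun g' h => ⟨s, hsS, hUs h⟩⟩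


/-- Theorem 3.7: for an `H`-SLT space, `X` is h.H relative to `H_α` iff `H_α`
is closed in the whisker topology on `π₁(X, α(1))`. -/
theorem hH_iff_closed_whisker [PathConnectedSpace X] {x₀ : X}
    (H : Subgroup (FundamentalGroup X x₀)) (hSLT : IsHSLT H) :
    ∀ (x : X) (α : Path x₀ x),
      HomotopicallyHausdorffRel (conjSubgroup H α) ↔
        @IsClosed _ (whiskerTopOnPi x)
          (conjSubgroup H α : Set (FundamentalGroup X x)) := by
  intro x α
  set K := conjSubgroup H α
  letI := whiskerTopOnPi x
  constructor
  · intro hH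
    rw [← isOpen_compl_iff, isOpen_iff_forall_mem_open]
    intro g hg
    obtain ⟨U, hUo, hxU, hP⟩ := hH x (Path.refl x) g hg
    refine ⟨{g' | ∃ β : Path x x, (∀ t, β t ∈ U) ∧ g' = g * loopClass β}, ?_, ?_, ?_⟩
    · rintro g' ⟨δ, hδ, rfl⟩ hk
      refine hP δ.symm (fun t => hδ _) _ (K.inv_mem hk) ?_
      rw [loopClass_refl_conj, loopClass_symm]
      group
    · exact TopologicalSpace.isOpen_generateFrom_of_mem ⟨g, U, hUo, hxU, rfl⟩
    · exact ⟨Path.refl x, fun _ => hxU, by rw [loopClass_refl]; group⟩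
  · intro hcl y β g hg
    have hopen : IsOpen[whiskerTopOnPi x] ((K : Set (FundamentalGroup X x))ᶜ) :=
      isOpen_compl_iff.mpr hcl
    obtain ⟨U, hUo, hxU, hsub⟩ := whisker_basis hopen hg
    obtain ⟨V, hVo, hyV, hV⟩ := hSLT x α y β U hUo hxU
    refine ⟨V, hVo, hyV, ?_⟩
    intro δ hδ h hh heq
    have hmem := hV δ hδ
    rw [heq] at hmem
    obtain ⟨k, hk, l, hl, hkl⟩ := Set.mem_mul.mp hmem
    obtain ⟨lam, hlam, rfl⟩ := loopSubgroup_mem hxU hl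
    have hmemc : g * loopClass lam.symm ∈ (K : Set (FundamentalGroup X x))ᶜ :=
      hsub ⟨lam.symm, fun t => hlam _, rfl⟩
    apply hmemc
    have hg2 : g = h⁻¹ * (k * loopClass lam) := by
      rw [hkl, ← mul_assoc, inv_mul_cancel, one_mul]
    rw [loopClass_symm, hg2]
    have heq2 : h⁻¹ * (k * loopClass lam) * (loopClass lam)⁻¹ = h⁻¹ * k := by group
    rw [heq2]
    exact K.mul_mem (K.inv_mem hh) hk


end Paper
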